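/- Let h > 0 and let p : ℝ → ℝ be a measurable, nonnegative function, integrable on [0,1], with ∫₀¹ p(s) ds > 0. Then for every z in the strip { z ∈ ℂ : |Im(z)| < hπ/2 }, the integral D(z) = ∫₀¹ p(s)·(1/cosh((z−s)/h)) ds has strictly positive real part; in particular D(z) ≠ 0 throughout the strip. -/

import Mathlib

open Real Complex MeasureTheory intervalIntegral

lemma my_cosh_re (w : ℂ) : (Complex.cosh w).re = Real.cosh w.re * Real.cos w.im := by
  rw [← Complex.re_add_im w, Complex.cosh_add, Complex.cosh_mul_I, Complex.sinh_mul_I]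
  simp [Complex.cos_ofReal_re, Complex.sinh_ofReal_re, Complex.sin_ofReal_re,
    Complex.cosh_ofReal_re]

lemma my_cosh_im (w : ℂ) : (Complex.cosh w).im = Real.sinh w.re * Real.sin w.im := by
  rw [← Complex.re_add_im w, Complex.cosh_add, Complex.cosh_mul_I, Complex.sinh_mul_I]
  simp [Complex.cos_ofReal_re, Complex.sinh_ofReal_re, Complex.sin_ofReal_re,
    Complex.cosh_ofReal_re]

theorem sech_integral_re_pos
    (h : ℝ) (hh : 0 < h) (p : ℝ → ℝ)
    (hp : Measurable p) (hp0 : ∀ s, 0 ≤ p s)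
    (hpint : IntegrableOn p (Set.Icc (0:ℝ) 1))
    (hppos : 0 < ∫ s in (0:ℝ)..1, p s) :
    ∀ z : ℂ, |z.im| < h * Real.pi / 2 →
      0 < (∫ s in (0:ℝ)..1,
            ((p s : ℝ) : ℂ) * (Complex.cosh ((z - (s : ℂ)) / (h : ℂ)))⁻¹).re ∧
      (∫ s in (0:ℝ)..1,
            ((p s : ℝ) : ℂ) * (Complex.cosh ((z - (s : ℂ)) / (h : ℂ)))⁻¹) ≠ 0 := by
  intro z hz
  set b := z.im / h with hbdef
  have hb : |b| < Real.pi / 2 := by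
    rw [hbdef, abs_div, abs_of_pos hh, div_lt_iff₀ hh]
    calc |z.im| < h * Real.pi / 2 := hz
    _ = Real.pi / 2 * h := by ring
  have hcb : 0 < Real.cos b :=
    Real.cos_pos_of_mem_Ioo ⟨(abs_lt.1 hb).1, (abs_lt.1 hb).2⟩
  have him : ∀ s : ℝ, ((z - (s:ℂ)) / (h:ℂ)).im = b := by
    intro s; simp [hbdef]
  -- per-point facts
  have hns : ∀ s : ℝ, Real.cos b ^ 2 ≤ Complex.normSq (Complex.cosh ((z - (s:ℂ)) / (h:ℂ))) := by
    intro s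
    rw [Complex.normSq_apply, my_cosh_re, my_cosh_im, him]
    set a := ((z - (s:ℂ)) / (h:ℂ)).re
    have h1 : (1:ℝ) ≤ Real.cosh a := Real.one_le_cosh _
    have h2 : 0 ≤ Real.cos b ^ 2 * (Real.cosh a ^ 2 - 1) := by
      nlinarith [sq_nonneg (Real.cos b), sq_nonneg (Real.cosh a - 1)]
    nlinarith [sq_nonneg (Real.sinh a * Real.sin b)]
  have hnsp : ∀ s : ℝ, 0 < Complex.normSq (Complex.cosh ((z - (s:ℂ)) / (h:ℂ))) :=
    fun s => lt_of_lt_of_le (by positivity) (hns s)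
  have hne0 : ∀ s : ℝ, Complex.cosh ((z - (s:ℂ)) / (h:ℂ)) ≠ 0 := by
    intro s hc
    simpa [hc] using (hnsp s)
  set g : ℝ → ℝ := fun s => ((Complex.cosh ((z - (s:ℂ)) / (h:ℂ)))⁻¹).re with hgdef
  have hgpos : ∀ s : ℝ, 0 < g s := by
    intro s
    rw [hgdef]
    simp only [Complex.inv_re, my_cosh_re, him]
    exact div_pos (mul_pos (Real.cosh_pos _) hcb) (hnsp s)
  have hub : ∀ s : ℝ, ‖(Complex.cosh ((z - (s:ℂ)) / (h:ℂ)))⁻¹‖ ≤ (Real.cos b)⁻¹ := by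
    intro s
    rw [norm_inv]
    have habs : Real.cos b ≤ ‖Complex.cosh ((z - (s:ℂ)) / (h:ℂ))‖ := by
      have h1 := hns s
      nlinarith [Complex.sq_norm (Complex.cosh ((z - (s:ℂ)) / (h:ℂ))),
        norm_nonneg (Complex.cosh ((z - (s:ℂ)) / (h:ℂ))), hcb]
    exact inv_anti₀ hcb habs
  have hgc : Continuous g := by
    apply Complex.continuous_re.comp
    exact ((Complex.continuous_cosh.comp (by continuity)).inv₀ hne0)
  -- minimum of g on [0,1]
  obtain ⟨s₀, hs₀, hmin⟩ := isCompact_Icc.exists_isMinOn (Set.nonempty_Icc.2 zero_le_one)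
    hgc.continuousOn
  set ε := g s₀ with hεdef
  have hε : 0 < ε := hgpos s₀
  -- integrability
  have hpIoc : IntegrableOn p (Set.Ioc (0:ℝ) 1) := hpint.mono_set Set.Ioc_subset_Icc_self
  have hintC : IntegrableOn
      (fun s => ((p s : ℝ) : ℂ) * (Complex.cosh ((z - (s:ℂ)) / (h:ℂ)))⁻¹) (Set.Ioc (0:ℝ) 1) := by
    have hm : AEStronglyMeasurable (fun s : ℝ => (Complex.cosh ((z - (s:ℂ)) / (h:ℂ)))⁻¹)
        (volume.restrict (Set.Ioc (0:ℝ) 1)) :=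
      ((Complex.continuous_cosh.comp (by continuity)).inv₀ hne0).aestronglyMeasurable
    have := Integrable.bdd_mul hpIoc.ofReal hm (c := (Real.cos b)⁻¹) (Filter.Eventually.of_forall hub)
    exact this.congr (Filter.Eventually.of_forall fun s => mul_comm _ _)
  have hintR : IntegrableOn (fun s => p s * g s) (Set.Ioc (0:ℝ) 1) := by
    have hm : AEStronglyMeasurable g (volume.restrict (Set.Ioc (0:ℝ) 1)) :=
      hgc.aestronglyMeasurable
    have hb' : ∀ s : ℝ, ‖g s‖ ≤ (Real.cos b)⁻¹ := by
      intro s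
      calc ‖g s‖ = |((Complex.cosh ((z - (s:ℂ)) / (h:ℂ)))⁻¹).re| := rfl
      _ ≤ ‖(Complex.cosh ((z - (s:ℂ)) / (h:ℂ)))⁻¹‖ := Complex.abs_re_le_norm _
      _ ≤ (Real.cos b)⁻¹ := hub s
    have := Integrable.bdd_mul hpIoc hm (c := (Real.cos b)⁻¹) (Filter.Eventually.of_forall hb')
    exact this.congr (Filter.Eventually.of_forall fun s => mul_comm _ _)
  -- identify real part
  have key : (∫ s in (0:ℝ)..1,
      ((p s : ℝ) : ℂ) * (Complex.cosh ((z - (s:ℂ)) / (h:ℂ)))⁻¹).re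
      = ∫ s in Set.Ioc (0:ℝ) 1, p s * g s := by
    rw [intervalIntegral.integral_of_le zero_le_one]
    simp only [← RCLike.re_to_complex]
    rw [← integral_re hintC]
    apply MeasureTheory.integral_congr_ae
    filter_upwards with s
    simp [hgdef, Complex.mul_re]
  -- positivity
  have h2 : ∫ s in Set.Ioc (0:ℝ) 1, ε * p s ≤ ∫ s in Set.Ioc (0:ℝ) 1, p s * g s := by
    apply setIntegral_mono_on (hpIoc.const_mul ε) hintR measurableSet_Ioc
    intro s hs
    have hgs : ε ≤ g s := hmin (Set.Ioc_subset_Icc_self hs)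
    nlinarith [hp0 s, hgpos s]
  have h1 : 0 < ∫ s in Set.Ioc (0:ℝ) 1, ε * p s := by
    rw [MeasureTheory.integral_const_mul]
    rw [intervalIntegral.integral_of_le zero_le_one] at hppos
    exact mul_pos hε hppos
  have hpos : 0 < (∫ s in (0:ℝ)..1,
      ((p s : ℝ) : ℂ) * (Complex.cosh ((z - (s:ℂ)) / (h:ℂ)))⁻¹).re := by
    rw [key]; exact lt_of_lt_of_le h1 h2
  refine ⟨hpos, fun H => ?_⟩
  rw [H] at hpos
  simp at hpos
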